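/- Let G = (V,E) be a finite simple graph on n vertices in which every vertex has degree at least n − m, and let 0 < p < 1. Construct a random complete bipartite subgraph H of G as follows: include each vertex of G in a set A independently with probability p; let B₀ be the set of vertices in V \ A adjacent to all vertices of A; include each v ∈ B₀ in a set B independently with probability (1−p)^(d_v − n + m), where d_v is the degree of v in G; and let H be the complete bipartite graph with partite sets A and B. Then for every edge {u,v} of G, the probability that {u,v} is an edge of H (i.e., that one endpoint lies in A and the other in B) equals 2p(1−p)^m, and for every vertex v of G, the probability that v ∈ A ∪ B equals p + (1−p)^m. -/

import Mathlib

open MeasureTheory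

/-- The Bernoulli measure on `Bool` with parameter `p` (truncated into `[0,1]`;
for `0 ≤ p ≤ 1` this is the genuine Bernoulli(`p`) distribution: `true` has
probability `p` and `false` has probability `1 - p`). -/
noncomputable def bernoulliMeasure (p : ℝ) : Measure Bool :=
  (PMF.bernoulli (min (Real.toNNReal p) 1) (min_le_right _ _)).toMeasure

/-- The sample space for the random complete bipartite subgraph construction: each
vertex `v` independently receives a pair of random bits, the first deciding
membership in `A` (probability `p`), the second deciding membership in `B` given
`v ∈ B₀` (probability `(1-p)^(d_v - n + m)`). -/
noncomputable def constructionMeasure (n m : ℕ) (G : SimpleGraph (Fin n))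
    [DecidableRel G.Adj] (p : ℝ) : Measure (Fin n → Bool × Bool) :=
  Measure.pi fun v =>
    (bernoulliMeasure p).prod (bernoulliMeasure ((1 - p) ^ (G.degree v + m - n)))

/-- The random set `A`: each vertex is included independently with probability `p`. -/
def setA {n : ℕ} (ω : Fin n → Bool × Bool) : Set (Fin n) := {v | (ω v).1 = true}

/-- The set `B₀` of vertices outside `A` adjacent to all vertices of `A`. -/
def setB0 {n : ℕ} (G : SimpleGraph (Fin n)) (ω : Fin n → Bool × Bool) :
    Set (Fin n) :=
  {v | v ∉ setA ω ∧ ∀ u ∈ setA ω, G.Adj u v}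

/-- The random set `B`: each `v ∈ B₀` is included independently with probability
`(1-p)^(d_v - n + m)`. -/
def setB {n : ℕ} (G : SimpleGraph (Fin n)) (ω : Fin n → Bool × Bool) :
    Set (Fin n) :=
  {v | v ∈ setB0 G ω ∧ (ω v).2 = true}

instance (p : ℝ) : IsProbabilityMeasure (bernoulliMeasure p) :=
  PMF.toMeasure.isProbabilityMeasure _

lemma bern_true {p : ℝ} (hp1 : p ≤ 1) :
    bernoulliMeasure p {true} = ENNReal.ofReal p := by
  rw [bernoulliMeasure, PMF.toMeasure_apply_singleton _ _ (measurableSet_singleton _),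
    PMF.bernoulli_apply]
  have hmin : ((min (Real.toNNReal p) 1 : NNReal) : ENNReal) = ENNReal.ofReal p := by
    rw [min_eq_left (Real.toNNReal_le_one.mpr hp1)]; rfl
  simp [hmin]

lemma bern_false {p : ℝ} (hp0 : 0 ≤ p) (hp1 : p ≤ 1) :
    bernoulliMeasure p {false} = ENNReal.ofReal (1 - p) := by
  rw [bernoulliMeasure, PMF.toMeasure_apply_singleton _ _ (measurableSet_singleton _),
    PMF.bernoulli_apply]
  have hmin : ((min (Real.toNNReal p) 1 : NNReal) : ENNReal) = ENNReal.ofReal p := by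
    rw [min_eq_left (Real.toNNReal_le_one.mpr hp1)]; rfl
  simp [hmin, ENNReal.ofReal_sub _ hp0]

lemma pair_true {p q : ℝ} (hp1 : p ≤ 1) :
    ((bernoulliMeasure p).prod (bernoulliMeasure q)) {b : Bool × Bool | b.1 = true}
      = ENNReal.ofReal p := by
  have h : {b : Bool × Bool | b.1 = true} = {true} ×ˢ Set.univ := by
    ext ⟨a, b⟩; simp
  rw [h, Measure.prod_prod, bern_true hp1, measure_univ, mul_one]

lemma pair_false {p q : ℝ} (hp0 : 0 ≤ p) (hp1 : p ≤ 1) :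
    ((bernoulliMeasure p).prod (bernoulliMeasure q)) {b : Bool × Bool | b.1 = false}
      = ENNReal.ofReal (1 - p) := by
  have h : {b : Bool × Bool | b.1 = false} = {false} ×ˢ Set.univ := by
    ext ⟨a, b⟩; simp
  rw [h, Measure.prod_prod, bern_false hp0 hp1, measure_univ, mul_one]

lemma pair_false_true {p q : ℝ} (hp0 : 0 ≤ p) (hp1 : p ≤ 1) (hq1 : q ≤ 1) :
    ((bernoulliMeasure p).prod (bernoulliMeasure q))
        {b : Bool × Bool | b.1 = false ∧ b.2 = true}
      = ENNReal.ofReal ((1 - p) * q) := by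
  have h : {b : Bool × Bool | b.1 = false ∧ b.2 = true} = {false} ×ˢ {true} := by
    ext ⟨a, b⟩; simp
  rw [h, Measure.prod_prod, bern_false hp0 hp1, bern_true hq1,
    ← ENNReal.ofReal_mul (by linarith)]

lemma card_nonnbrs {n : ℕ} (G : SimpleGraph (Fin n)) [DecidableRel G.Adj] (v : Fin n) :
    ((Finset.univ.erase v).filter fun w => ¬ G.Adj w v).card = n - 1 - G.degree v := by
  have h1 : (Finset.univ.erase v).filter (fun w => G.Adj w v) = G.neighborFinset v := by
    ext w
    simp only [Finset.mem_filter, Finset.mem_erase, Finset.mem_univ, true_and,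
      SimpleGraph.mem_neighborFinset, and_true]
    constructor
    · rintro ⟨_, h⟩; exact h.symm
    · intro h; exact ⟨h.ne', h.symm⟩
  have h2 := Finset.card_filter_add_card_filter_not
    (s := Finset.univ.erase v) (p := fun w => G.Adj w v)
  rw [h1, SimpleGraph.card_neighborFinset_eq_degree] at h2
  have h3 : (Finset.univ.erase v).card = n - 1 := by
    rw [Finset.card_erase_of_mem (Finset.mem_univ v), Finset.card_univ, Fintype.card_fin]
  omega

lemma measB {n m : ℕ} (G : SimpleGraph (Fin n)) [DecidableRel G.Adj]
    (hdeg : ∀ v : Fin n, n ≤ G.degree v + m)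
    {p : ℝ} (hp0 : 0 < p) (hp1 : p < 1) (v : Fin n) :
    constructionMeasure n m G p {ω | v ∈ setB G ω} = ENNReal.ofReal ((1 - p) ^ m) := by
  have h1p0 : (0:ℝ) ≤ 1 - p := by linarith
  have h1p1 : (1:ℝ) - p ≤ 1 := by linarith
  set S : Fin n → Set (Bool × Bool) := fun w =>
    if w = v then {b | b.1 = false ∧ b.2 = true}
    else if G.Adj w v then Set.univ else {b | b.1 = false} with hS
  have hset : {ω : Fin n → Bool × Bool | v ∈ setB G ω} = Set.pi Set.univ S := by
    ext ω
    simp only [Set.mem_setOf_eq, setB, setB0, setA, Set.mem_pi, Set.mem_univ, true_implies]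
    constructor
    · rintro ⟨⟨hv1, hall⟩, hv2⟩ w
      by_cases hw : w = v
      · subst hw
        simp only [hS, if_pos rfl, Set.mem_setOf_eq]
        exact ⟨by simpa using hv1, hv2⟩
      · simp only [hS, if_neg hw]
        split_ifs with ha
        · trivial
        · simp only [Set.mem_setOf_eq]
          cases hb : (ω w).1
          · rfl
          · exact absurd (hall w hb) ha
    · intro h
      have hv := h v
      simp only [hS, if_pos rfl, Set.mem_setOf_eq] at hv
      refine ⟨⟨by simp [hv.1], fun w hw => ?_⟩, hv.2⟩
      by_contra ha
      have hw' := h w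
      have hwv : w ≠ v := by rintro rfl; simp [hv.1] at hw
      simp only [hS, if_neg hwv, if_neg ha, Set.mem_setOf_eq] at hw'
      simp [hw'] at hw
  set g : Fin n → ℝ := fun w =>
    if w = v then (1 - p) * (1 - p) ^ (G.degree v + m - n)
    else if G.Adj w v then 1 else (1 - p) with hg
  have hgnn : ∀ w ∈ Finset.univ, (0:ℝ) ≤ g w := by
    intro w _
    simp only [hg]
    split_ifs
    · positivity
    · norm_num
    · linarith
  rw [hset, constructionMeasure, Measure.pi_pi]
  have hfac : ∀ w ∈ Finset.univ,
      ((bernoulliMeasure p).prod (bernoulliMeasure ((1 - p) ^ (G.degree w + m - n)))) (S w)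
        = ENNReal.ofReal (g w) := by
    intro w _
    by_cases hw : w = v
    · subst hw
      simp only [hS, hg, if_pos rfl]
      exact pair_false_true hp0.le hp1.le (pow_le_one₀ h1p0 h1p1)
    · simp only [hS, hg, if_neg hw]
      split_ifs with ha
      · simp
      · exact pair_false hp0.le hp1.le
  rw [Finset.prod_congr rfl hfac, ← ENNReal.ofReal_prod_of_nonneg hgnn]
  congr 1
  have hsplit : ∏ w, g w = g v * ∏ w ∈ Finset.univ.erase v, g w :=
    (Finset.mul_prod_erase _ _ (Finset.mem_univ v)).symm
  have h2 : ∏ w ∈ Finset.univ.erase v, g w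
      = (1 - p) ^ (n - 1 - G.degree v) := by
    have hcongr : ∏ w ∈ Finset.univ.erase v, g w
        = ∏ w ∈ Finset.univ.erase v, (if G.Adj w v then (1:ℝ) else 1 - p) :=
      Finset.prod_congr rfl (fun w hw => by
        simp only [hg, if_neg (Finset.mem_erase.mp hw).1])
    rw [hcongr, Finset.prod_ite (fun _ => (1:ℝ)) (fun _ => 1 - p), Finset.prod_const,
      Finset.prod_const, one_pow, one_mul, card_nonnbrs G v]
  rw [hsplit, h2]
  simp only [hg, if_pos rfl]
  have key : (1 - p) * (1 - p) ^ (G.degree v + m - n) * (1 - p) ^ (n - 1 - G.degree v)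
      = (1 - p) ^ (1 + (G.degree v + m - n) + (n - 1 - G.degree v)) := by
    rw [pow_add, pow_add, pow_one]
  rw [key]
  congr 1
  have := hdeg v
  have hd : G.degree v < n := by
    have := G.degree_lt_card_verts v
    simpa using this
  omega

lemma measAB {n m : ℕ} (G : SimpleGraph (Fin n)) [DecidableRel G.Adj]
    (hdeg : ∀ v : Fin n, n ≤ G.degree v + m)
    {p : ℝ} (hp0 : 0 < p) (hp1 : p < 1) {u v : Fin n} (huv : G.Adj u v) :
    constructionMeasure n m G p {ω | u ∈ setA ω ∧ v ∈ setB G ω}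
      = ENNReal.ofReal (p * (1 - p) ^ m) := by
  have h1p0 : (0:ℝ) ≤ 1 - p := by linarith
  have h1p1 : (1:ℝ) - p ≤ 1 := by linarith
  have hne : u ≠ v := huv.ne
  set S : Fin n → Set (Bool × Bool) := fun w =>
    if w = v then {b | b.1 = false ∧ b.2 = true}
    else if w = u then {b | b.1 = true}
    else if G.Adj w v then Set.univ else {b | b.1 = false} with hS
  have hset : {ω : Fin n → Bool × Bool | u ∈ setA ω ∧ v ∈ setB G ω}
      = Set.pi Set.univ S := by
    ext ω
    simp only [Set.mem_setOf_eq, setB, setB0, setA, Set.mem_pi, Set.mem_univ, true_implies]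
    constructor
    · rintro ⟨hu, ⟨hv1, hall⟩, hv2⟩ w
      by_cases hwv : w = v
      · subst hwv
        simp only [hS, if_pos rfl, Set.mem_setOf_eq]
        exact ⟨by simpa using hv1, hv2⟩
      · by_cases hwu : w = u
        · subst hwu
          simp only [hS, if_neg hwv, if_pos rfl, Set.mem_setOf_eq]
          exact hu
        · simp only [hS, if_neg hwv, if_neg hwu]
          split_ifs with ha
          · trivial
          · simp only [Set.mem_setOf_eq]
            cases hb : (ω w).1
            · rfl
            · exact absurd (hall w hb) ha
    · intro h
      have hv := h v
      simp only [hS, if_pos rfl, Set.mem_setOf_eq] at hv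
      have hu := h u
      simp only [hS, if_neg hne, if_pos rfl, Set.mem_setOf_eq] at hu
      refine ⟨hu, ⟨by simp [hv.1], fun w hw => ?_⟩, hv.2⟩
      by_contra ha
      have hwv : w ≠ v := by rintro rfl; simp [hv.1] at hw
      have hwu : w ≠ u := by rintro rfl; exact ha huv
      have hw' := h w
      simp only [hS, if_neg hwv, if_neg hwu, if_neg ha, Set.mem_setOf_eq] at hw'
      simp [hw'] at hw
  set g : Fin n → ℝ := fun w =>
    if w = v then (1 - p) * (1 - p) ^ (G.degree v + m - n)
    else if w = u then p
    else if G.Adj w v then 1 else (1 - p) with hg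
  have hgnn : ∀ w ∈ Finset.univ, (0:ℝ) ≤ g w := by
    intro w _
    simp only [hg]
    split_ifs
    · positivity
    · exact hp0.le
    · norm_num
    · linarith
  rw [hset, constructionMeasure, Measure.pi_pi]
  have hfac : ∀ w ∈ Finset.univ,
      ((bernoulliMeasure p).prod (bernoulliMeasure ((1 - p) ^ (G.degree w + m - n)))) (S w)
        = ENNReal.ofReal (g w) := by
    intro w _
    by_cases hwv : w = v
    · subst hwv
      simp only [hS, hg, if_pos rfl]
      exact pair_false_true hp0.le hp1.le (pow_le_one₀ h1p0 h1p1)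
    · by_cases hwu : w = u
      · subst hwu
        simp only [hS, hg, if_neg hwv, if_pos rfl]
        exact pair_true hp1.le
      · simp only [hS, hg, if_neg hwv, if_neg hwu]
        split_ifs with ha
        · simp
        · exact pair_false hp0.le hp1.le
  rw [Finset.prod_congr rfl hfac, ← ENNReal.ofReal_prod_of_nonneg hgnn]
  congr 1
  have hvmem : v ∈ Finset.univ := Finset.mem_univ v
  have humem : u ∈ Finset.univ.erase v := Finset.mem_erase.mpr ⟨hne, Finset.mem_univ u⟩
  have hsplit : ∏ w, g w = g v * (g u * ∏ w ∈ (Finset.univ.erase v).erase u, g w) := by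
    rw [Finset.mul_prod_erase _ _ humem, Finset.mul_prod_erase _ _ hvmem]
  have hfilter : ((Finset.univ.erase v).erase u).filter (fun w => ¬ G.Adj w v)
      = (Finset.univ.erase v).filter (fun w => ¬ G.Adj w v) := by
    ext w
    simp only [Finset.mem_filter, Finset.mem_erase, Finset.mem_univ, true_and, and_true]
    constructor
    · rintro ⟨⟨_, h⟩, h2⟩; exact ⟨h, h2⟩
    · rintro ⟨h, h2⟩
      refine ⟨⟨?_, h⟩, h2⟩
      rintro rfl; exact h2 huv
  have h2 : ∏ w ∈ (Finset.univ.erase v).erase u, g w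
      = (1 - p) ^ (n - 1 - G.degree v) := by
    have hcongr : ∏ w ∈ (Finset.univ.erase v).erase u, g w
        = ∏ w ∈ (Finset.univ.erase v).erase u, (if G.Adj w v then (1:ℝ) else 1 - p) :=
      Finset.prod_congr rfl (fun w hw => by
        have ha1 := (Finset.mem_erase.mp hw).1
        have ha2 := (Finset.mem_erase.mp (Finset.mem_erase.mp hw).2).1
        simp only [hg, if_neg ha2, if_neg ha1])
    rw [hcongr, Finset.prod_ite (fun _ => (1:ℝ)) (fun _ => 1 - p), Finset.prod_const,
      Finset.prod_const, one_pow, one_mul, hfilter, card_nonnbrs G v]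
  rw [hsplit, h2]
  simp only [hg, if_pos rfl, if_neg hne, if_true]
  have hd : G.degree v < n := by
    have := G.degree_lt_card_verts v
    simpa using this
  have hdm := hdeg v
  have key : (1 - p) * (1 - p) ^ (G.degree v + m - n) * (p * (1 - p) ^ (n - 1 - G.degree v))
      = p * ((1 - p) ^ (1 + (G.degree v + m - n) + (n - 1 - G.degree v))) := by
    rw [pow_add, pow_add, pow_one]; ring
  rw [key]
  congr 2
  omega

/-- **The random complete bipartite subgraph of a very dense graph.**  Let `G` be
a graph on `n` vertices of minimum degree at least `n - m` (stated as
`n ≤ deg v + m`) and let `0 < p < 1`.  In the random construction above (each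
vertex lies in `A` with probability `p`; each vertex `v` of `B₀` lies in `B` with
probability `(1-p)^(d_v - n + m)`, all independently; `H` is the complete
bipartite graph with partite sets `A` and `B`), every edge `{u,v}` of `G` is an
edge of `H` — i.e. has one endpoint in `A` and the other in `B` — with
probability exactly `2p(1-p)^m`, and every vertex `v` of `G` lies in `A ∪ B` with
probability exactly `p + (1-p)^m`. -/
theorem random_bipartite_subgraph (n m : ℕ) (G : SimpleGraph (Fin n))
    [DecidableRel G.Adj] (hdeg : ∀ v : Fin n, n ≤ G.degree v + m)
    (p : ℝ) (hp0 : 0 < p) (hp1 : p < 1) :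
    (∀ u v : Fin n, G.Adj u v →
      constructionMeasure n m G p
          {ω | (u ∈ setA ω ∧ v ∈ setB G ω) ∨ (v ∈ setA ω ∧ u ∈ setB G ω)} =
        ENNReal.ofReal (2 * p * (1 - p) ^ m)) ∧
    (∀ v : Fin n,
      constructionMeasure n m G p {ω | v ∈ setA ω ∨ v ∈ setB G ω} =
        ENNReal.ofReal (p + (1 - p) ^ m)) := by
  have h1p0 : (0:ℝ) ≤ 1 - p := by linarith
  have hmeas : ∀ s : Set (Fin n → Bool × Bool), MeasurableSet s := fun s =>
    s.toFinite.measurableSet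
  constructor
  · intro u v huv
    have hsplit : {ω : Fin n → Bool × Bool |
        (u ∈ setA ω ∧ v ∈ setB G ω) ∨ (v ∈ setA ω ∧ u ∈ setB G ω)}
        = {ω | u ∈ setA ω ∧ v ∈ setB G ω} ∪ {ω | v ∈ setA ω ∧ u ∈ setB G ω} := rfl
    have hdisj : Disjoint {ω : Fin n → Bool × Bool | u ∈ setA ω ∧ v ∈ setB G ω}
        {ω : Fin n → Bool × Bool | v ∈ setA ω ∧ u ∈ setB G ω} := by
      rw [Set.disjoint_left]
      rintro ω ⟨hu, _⟩ ⟨_, hu'⟩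
      exact hu'.1.1 hu
    rw [hsplit, measure_union hdisj (hmeas _), measAB G hdeg hp0 hp1 huv,
      measAB G hdeg hp0 hp1 huv.symm,
      ← ENNReal.ofReal_add (by positivity) (by positivity)]
    congr 1
    ring
  · intro v
    have hsplit : {ω : Fin n → Bool × Bool | v ∈ setA ω ∨ v ∈ setB G ω}
        = {ω | v ∈ setA ω} ∪ {ω | v ∈ setB G ω} := rfl
    have hdisj : Disjoint {ω : Fin n → Bool × Bool | v ∈ setA ω}
        {ω : Fin n → Bool × Bool | v ∈ setB G ω} := by
      rw [Set.disjoint_left]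
      rintro ω hv ⟨⟨hv1, _⟩, _⟩
      exact hv1 hv
    have hA : constructionMeasure n m G p {ω | v ∈ setA ω} = ENNReal.ofReal p := by
      have hset : {ω : Fin n → Bool × Bool | v ∈ setA ω}
          = Set.pi Set.univ (fun w => if w = v then {b : Bool × Bool | b.1 = true}
              else Set.univ) := by
        ext ω
        simp only [Set.mem_setOf_eq, setA, Set.mem_pi, Set.mem_univ, true_implies]
        constructor
        · intro h w
          split_ifs with hw
          · subst hw; exact h
          · trivial
        · intro h
          have := h v
          simpa using this
      rw [hset, constructionMeasure, Measure.pi_pi]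
      rw [Finset.prod_eq_single v (fun w _ hw => by simp [if_neg hw])
        (fun h => absurd (Finset.mem_univ v) h)]
      simp only [if_pos rfl]
      exact pair_true hp1.le
    rw [hsplit, measure_union hdisj (hmeas _), hA, measB G hdeg hp0 hp1 v,
      ← ENNReal.ofReal_add hp0.le (by positivity)]
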